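/- There exists a nonzero polynomial P ∈ ℂ[λ,μ] such that whenever P(λ,μ) ≠ 0, there are exactly 8 quadruples (q,a,c,d) ∈ ℂ⁴ satisfying q² + 2λq + 1 = 0, a(1 + λq) = −(λ + q), 2μcd = 3a² + 3, and c² + d² + 2a² − 2λa + 2 = 0, and the corresponding 8 planes W(q,a,c,d) are pairwise distinct 2-dimensional subspaces of ℂ⁸, each a line on X_{λ,μ}. -/

import Mathlib

noncomputable section

/-- `Q₁ = x₀²+x₁²+x₂²+x₃²+x₄²+x₅² − 2μx₆x₇`. -/
def Q1 (m : ℂ) (x : Fin 8 → ℂ) : ℂ :=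
  x 0 ^ 2 + x 1 ^ 2 + x 2 ^ 2 + x 3 ^ 2 + x 4 ^ 2 + x 5 ^ 2 - 2 * m * x 6 * x 7

/-- `Q₂ = x₀²+x₁²+x₂²+x₃²+x₆²+x₇² − 2λx₄x₅`. -/
def Q2 (l : ℂ) (x : Fin 8 → ℂ) : ℂ :=
  x 0 ^ 2 + x 1 ^ 2 + x 2 ^ 2 + x 3 ^ 2 + x 6 ^ 2 + x 7 ^ 2 - 2 * l * x 4 * x 5

/-- `Q₃ = x₀²+x₁²+x₄²+x₅²+x₆²+x₇² − 2λx₂x₃`. -/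
def Q3 (l : ℂ) (x : Fin 8 → ℂ) : ℂ :=
  x 0 ^ 2 + x 1 ^ 2 + x 4 ^ 2 + x 5 ^ 2 + x 6 ^ 2 + x 7 ^ 2 - 2 * l * x 2 * x 3

/-- `Q₄ = x₂²+x₃²+x₄²+x₅²+x₆²+x₇² − 2λx₀x₁`. -/
def Q4 (l : ℂ) (x : Fin 8 → ℂ) : ℂ :=
  x 2 ^ 2 + x 3 ^ 2 + x 4 ^ 2 + x 5 ^ 2 + x 6 ^ 2 + x 7 ^ 2 - 2 * l * x 0 * x 1

/-- The plane `W(q,a,c,d) ⊆ ℂ⁸` spanned by `u = (1,q,ω,ωq,ω²,ω²q,0,0)` and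
`v = (a,1,a,1,a,1,c,d)`, for `ω` a primitive cube root of unity. -/
def linePlane8 (w q a c d : ℂ) : Submodule ℂ (Fin 8 → ℂ) :=
  Submodule.span ℂ
    {![1, q, w, w * q, w ^ 2, w ^ 2 * q, 0, 0], ![a, 1, a, 1, a, 1, c, d]}

/-- The system of equations characterizing the 8 lines of Lemma 4.1. -/
def lineEqs8 (l m q a c d : ℂ) : Prop :=
  q ^ 2 + 2 * l * q + 1 = 0 ∧ a * (1 + l * q) = -(l + q) ∧
    2 * m * c * d = 3 * a ^ 2 + 3 ∧ c ^ 2 + d ^ 2 + 2 * a ^ 2 - 2 * l * a + 2 = 0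

/- component-evaluation helper lemmas -/
lemma v8_0 (x0 x1 x2 x3 x4 x5 x6 x7 : ℂ) : (![x0,x1,x2,x3,x4,x5,x6,x7] : Fin 8 → ℂ) 0 = x0 := rfl
lemma v8_1 (x0 x1 x2 x3 x4 x5 x6 x7 : ℂ) : (![x0,x1,x2,x3,x4,x5,x6,x7] : Fin 8 → ℂ) 1 = x1 := rfl
lemma v8_2 (x0 x1 x2 x3 x4 x5 x6 x7 : ℂ) : (![x0,x1,x2,x3,x4,x5,x6,x7] : Fin 8 → ℂ) 2 = x2 := rfl
lemma v8_3 (x0 x1 x2 x3 x4 x5 x6 x7 : ℂ) : (![x0,x1,x2,x3,x4,x5,x6,x7] : Fin 8 → ℂ) 3 = x3 := rfl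
lemma v8_4 (x0 x1 x2 x3 x4 x5 x6 x7 : ℂ) : (![x0,x1,x2,x3,x4,x5,x6,x7] : Fin 8 → ℂ) 4 = x4 := rfl
lemma v8_5 (x0 x1 x2 x3 x4 x5 x6 x7 : ℂ) : (![x0,x1,x2,x3,x4,x5,x6,x7] : Fin 8 → ℂ) 5 = x5 := rfl
lemma v8_6 (x0 x1 x2 x3 x4 x5 x6 x7 : ℂ) : (![x0,x1,x2,x3,x4,x5,x6,x7] : Fin 8 → ℂ) 6 = x6 := rfl
lemma v8_7 (x0 x1 x2 x3 x4 x5 x6 x7 : ℂ) : (![x0,x1,x2,x3,x4,x5,x6,x7] : Fin 8 → ℂ) 7 = x7 := rfl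

/-- If `1 + l q = 0` and `q` satisfies the quadratic, then `l² = 1`. -/
lemma aux_lq_ne (l q : ℂ) (e1 : q ^ 2 + 2 * l * q + 1 = 0) (hl1 : l ^ 2 - 1 ≠ 0) :
    1 + l * q ≠ 0 := by
  intro h0
  apply hl1
  have : l ^ 2 = 1 := by linear_combination (-l^2) * e1 + (l*q - 1 + 2*l^2) * h0
  linear_combination this

/-- For any solution of the system, `c+d ≠ 0` and `c−d ≠ 0` (under genericity). -/
lemma aux_cd_ne (l m q a c d : ℂ) (h : lineEqs8 l m q a c d)
    (hl0 : l ≠ 0) (hl1 : l ^ 2 - 1 ≠ 0) (hm0 : m ≠ 0) (hm1 : m - 1 ≠ 0) (hm2 : m + 1 ≠ 0) :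
    c + d ≠ 0 ∧ c - d ≠ 0 := by
  obtain ⟨e1, e2, e3, e4⟩ := h
  have hq0 : q ≠ 0 := by
    intro h; rw [h] at e1; norm_num at e1
  have hlq : 1 + l * q ≠ 0 := aux_lq_ne l q e1 hl1
  have ha2 : a ^ 2 * (1 + l * q) ^ 2 = l ^ 2 - 1 := by
    linear_combination (a * (1 + l * q) - (l + q)) * e2 + e1
  have hla : l * a * (1 + l * q) ^ 2 = -(l * q * (1 - l ^ 2)) := by
    linear_combination l * (1 + l * q) * e2 - l ^ 2 * e1
  have hsq : (1 + l * q) ^ 2 = (1 - l ^ 2) * (1 + 2 * l * q) := by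
    linear_combination l ^ 2 * e1
  have hsum : m * (1 + l * q) ^ 2 * (c + d) ^ 2 = 6 * l * q * (1 - l ^ 2) * (1 - m) := by
    linear_combination (1 + l * q) ^ 2 * e3 + m * (1 + l * q) ^ 2 * e4 + (3 - 2 * m) * ha2
      + 2 * m * hla + (3 - 2 * m) * hsq
  have hdiff : m * (1 + l * q) ^ 2 * (c - d) ^ 2 = -(6 * l * q * (1 - l ^ 2) * (1 + m)) := by
    linear_combination (-(1 + l * q) ^ 2) * e3 + m * (1 + l * q) ^ 2 * e4 - (3 + 2 * m) * ha2
      + 2 * m * hla - (3 + 2 * m) * hsq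
  have h1 : (1 : ℂ) - l ^ 2 ≠ 0 := by intro h; exact hl1 (by linear_combination -h)
  have h2 : (1 : ℂ) - m ≠ 0 := by intro h; exact hm1 (by linear_combination -h)
  have h3 : (1 : ℂ) + m ≠ 0 := by intro h; exact hm2 (by linear_combination h)
  constructor
  · intro h
    rw [h] at hsum
    exact (mul_ne_zero (mul_ne_zero (mul_ne_zero
      (mul_ne_zero (by norm_num : (6:ℂ) ≠ 0) hl0) hq0) h1) h2) (by linear_combination -hsum)
  · intro h
    rw [h] at hdiff
    have h0 : 6 * l * q * (1 - l ^ 2) * (1 + m) = 0 := by linear_combination hdiff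
    exact (mul_ne_zero (mul_ne_zero (mul_ne_zero
      (mul_ne_zero (by norm_num : (6:ℂ) ≠ 0) hl0) hq0) h1) h3) h0

/-- Every point of the plane satisfies the four quadrics. -/
lemma aux_on_line (w l m q a c d : ℂ) (hws : w ^ 2 + w + 1 = 0)
    (h : lineEqs8 l m q a c d) :
    ∀ x ∈ linePlane8 w q a c d, Q1 m x = 0 ∧ Q2 l x = 0 ∧ Q3 l x = 0 ∧ Q4 l x = 0 := by
  obtain ⟨e1, e2, e3, e4⟩ := h
  intro x hx
  rw [linePlane8, Submodule.mem_span_pair] at hx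
  obtain ⟨s, t, hst⟩ := hx
  subst hst
  refine ⟨?_, ?_, ?_, ?_⟩
  · simp only [Q1, Pi.add_apply, Pi.smul_apply, smul_eq_mul,
      v8_0, v8_1, v8_2, v8_3, v8_4, v8_5, v8_6, v8_7]
    linear_combination (s^2*(1+q^2)*(w^2-w+1) + 2*s*t*(a+q)) * hws - t^2 * e3
  · simp only [Q2, Pi.add_apply, Pi.smul_apply, smul_eq_mul,
      v8_0, v8_1, v8_2, v8_3, v8_4, v8_5, v8_6, v8_7]
    linear_combination (-s^2*w) * e1 + (-2*s*t*w^2) * e2 + t^2 * e4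
      + (s^2*(1+q^2-2*l*q*w*(w-1)) + 2*s*t*(a+q)) * hws
  · simp only [Q3, Pi.add_apply, Pi.smul_apply, smul_eq_mul,
      v8_0, v8_1, v8_2, v8_3, v8_4, v8_5, v8_6, v8_7]
    linear_combination (-s^2*w^2) * e1 + (-2*s*t*w) * e2 + t^2 * e4
      + (s^2*(1+q^2)*(w^2-w+1) + 2*s*t*(a+q)) * hws
  · simp only [Q4, Pi.add_apply, Pi.smul_apply, smul_eq_mul,
      v8_0, v8_1, v8_2, v8_3, v8_4, v8_5, v8_6, v8_7]
    linear_combination (-s^2) * e1 + (-2*s*t) * e2 + t^2 * e4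
      + (s^2*(1+q^2)*(w^2-w+1) + 2*s*t*(a+q)) * hws

/-- The plane is 2-dimensional when `(c,d) ≠ (0,0)` (we use `c+d ≠ 0`). -/
lemma aux_finrank (w q a c d : ℂ) (hcd : c + d ≠ 0) :
    Module.finrank ℂ (linePlane8 w q a c d) = 2 := by
  have hli : LinearIndependent ℂ
      ![![1, q, w, w * q, w ^ 2, w ^ 2 * q, 0, 0], ![a, 1, a, 1, a, 1, c, d]] := by
    rw [LinearIndependent.pair_iff]
    intro s t hst
    have h0 := congrFun hst 0
    have h6 := congrFun hst 6
    have h7 := congrFun hst 7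
    simp only [Pi.add_apply, Pi.smul_apply, smul_eq_mul, v8_0, v8_6, v8_7, Pi.zero_apply] at h0 h6 h7
    have ht : t = 0 := by
      have h' : t * (c + d) = 0 := by linear_combination h6 + h7
      rcases mul_eq_zero.1 h' with h | h
      · exact h
      · exact absurd h hcd
    refine ⟨?_, ht⟩
    rw [ht] at h0
    linear_combination h0
  have hr : Set.range ![![1, q, w, w * q, w ^ 2, w ^ 2 * q, 0, 0], ![a, 1, a, 1, a, 1, c, d]]
      = {![1, q, w, w * q, w ^ 2, w ^ 2 * q, 0, 0], ![a, 1, a, 1, a, 1, c, d]} := by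
    simp [Matrix.range_cons, Matrix.range_empty, Set.pair_comm]
  rw [linePlane8, ← hr, finrank_span_eq_card hli]
  simp

/-- Distinct solutions give distinct planes. -/
lemma aux_inj (w l m : ℂ) (hw1 : w ≠ 1) (hl1 : l ^ 2 - 1 ≠ 0) {q a c d q' a' c' d' : ℂ}
    (h : lineEqs8 l m q a c d) (h' : lineEqs8 l m q' a' c' d')
    (hcd : c + d ≠ 0)
    (heq : linePlane8 w q a c d = linePlane8 w q' a' c' d') :
    q = q' ∧ a = a' ∧ c = c' ∧ d = d' := by
  obtain ⟨e1, e2, e3, e4⟩ := h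
  obtain ⟨e1', e2', e3', e4'⟩ := h'
  -- u' lies in the plane of (q,a,c,d)
  have hu' : (![1, q', w, w * q', w ^ 2, w ^ 2 * q', 0, 0] : Fin 8 → ℂ)
      ∈ linePlane8 w q a c d := by
    rw [heq, linePlane8]
    exact Submodule.subset_span (Set.mem_insert _ _)
  rw [linePlane8, Submodule.mem_span_pair] at hu'
  obtain ⟨s, t, hst⟩ := hu'
  have h0 := congrFun hst 0
  have h1 := congrFun hst 1
  have h6 := congrFun hst 6
  have h7 := congrFun hst 7
  simp only [Pi.add_apply, Pi.smul_apply, smul_eq_mul, v8_0, v8_1, v8_6, v8_7] at h0 h1 h6 h7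
  have ht : t = 0 := by
    have h' : t * (c + d) = 0 := by linear_combination h6 + h7
    rcases mul_eq_zero.1 h' with h | h
    · exact h
    · exact absurd h hcd
  rw [ht] at h0 h1
  have hs : s = 1 := by linear_combination h0
  rw [hs] at h1
  have hq : q = q' := by linear_combination h1
  subst hq
  have ha : a = a' := by
    have hlq : 1 + l * q ≠ 0 := aux_lq_ne l q e1 hl1
    have h'' : (a - a') * (1 + l * q) = 0 := by linear_combination e2 - e2'
    rcases mul_eq_zero.1 h'' with h | h
    · linear_combination h
    · exact absurd h hlq
  subst ha
  -- v' lies in the plane of (q,a,c,d)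
  have hv' : (![a, 1, a, 1, a, 1, c', d'] : Fin 8 → ℂ) ∈ linePlane8 w q a c d := by
    rw [heq, linePlane8]
    exact Submodule.subset_span (Set.mem_insert_of_mem _ rfl)
  rw [linePlane8, Submodule.mem_span_pair] at hv'
  obtain ⟨s2, t2, hst2⟩ := hv'
  have g0 := congrFun hst2 0
  have g1 := congrFun hst2 1
  have g2 := congrFun hst2 2
  have g6 := congrFun hst2 6
  have g7 := congrFun hst2 7
  simp only [Pi.add_apply, Pi.smul_apply, smul_eq_mul, v8_0, v8_1, v8_2, v8_6, v8_7]
    at g0 g1 g2 g6 g7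
  have hs2 : s2 = 0 := by
    have h'' : s2 * (1 - w) = 0 := by linear_combination g0 - g2
    rcases mul_eq_zero.1 h'' with h | h
    · exact h
    · exact absurd (by linear_combination -h : w = 1) hw1
  rw [hs2] at g1 g6 g7
  have ht2 : t2 = 1 := by linear_combination g1
  rw [ht2] at g6 g7
  exact ⟨rfl, rfl, by linear_combination g6, by linear_combination g7⟩

set_option maxHeartbeats 2000000 in
theorem stmt_13 (w : ℂ) (hw : IsPrimitiveRoot w 3) :
    ∃ P : MvPolynomial (Fin 2) ℂ, P ≠ 0 ∧
      ∀ l m : ℂ, MvPolynomial.eval ![l, m] P ≠ 0 →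
        ({t : ℂ × ℂ × ℂ × ℂ | lineEqs8 l m t.1 t.2.1 t.2.2.1 t.2.2.2}.ncard = 8 ∧
          Set.InjOn (fun t : ℂ × ℂ × ℂ × ℂ => linePlane8 w t.1 t.2.1 t.2.2.1 t.2.2.2)
            {t : ℂ × ℂ × ℂ × ℂ | lineEqs8 l m t.1 t.2.1 t.2.2.1 t.2.2.2} ∧
          ∀ t : ℂ × ℂ × ℂ × ℂ, lineEqs8 l m t.1 t.2.1 t.2.2.1 t.2.2.2 →
            Module.finrank ℂ (linePlane8 w t.1 t.2.1 t.2.2.1 t.2.2.2) = 2 ∧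
            ∀ x ∈ linePlane8 w t.1 t.2.1 t.2.2.1 t.2.2.2,
              Q1 m x = 0 ∧ Q2 l x = 0 ∧ Q3 l x = 0 ∧ Q4 l x = 0) := by
  have hw3 : w ^ 3 = 1 := hw.pow_eq_one
  have hw1 : w ≠ 1 := hw.ne_one (by norm_num)
  have hws : w ^ 2 + w + 1 = 0 := by
    have h : (w - 1) * (w ^ 2 + w + 1) = 0 := by linear_combination hw3
    rcases mul_eq_zero.1 h with h | h
    · exact absurd (by linear_combination h : w = 1) hw1
    · exact h
  refine ⟨MvPolynomial.X 0 * ((MvPolynomial.X 0) ^ 2 - 1) *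
      MvPolynomial.X 1 * ((MvPolynomial.X 1) ^ 2 - 1), ?_, ?_⟩
  · intro h
    have h2 := congrArg (MvPolynomial.eval ![(2 : ℂ), 2]) h
    simp [MvPolynomial.eval_X] at h2
    norm_num at h2
  intro l m hP
  have hval : l * (l ^ 2 - 1) * m * (m ^ 2 - 1) ≠ 0 := by
    simpa [MvPolynomial.eval_X] using hP
  have hl0 : l ≠ 0 := fun h => hval (by rw [h]; ring)
  have hl1 : l ^ 2 - 1 ≠ 0 := fun h => hval (by rw [h]; ring)
  have hm0 : m ≠ 0 := fun h => hval (by rw [h]; ring)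
  have hmm : m ^ 2 - 1 ≠ 0 := fun h => hval (by rw [h]; ring)
  have hm1 : m - 1 ≠ 0 := fun h => hmm (by linear_combination (m + 1) * h)
  have hm2 : m + 1 ≠ 0 := fun h => hmm (by linear_combination (m - 1) * h)
  -- square root of l² − 1
  obtain ⟨e, he⟩ := IsAlgClosed.exists_pow_nat_eq (k := ℂ) (l ^ 2 - 1) two_pos
  have he0 : e ≠ 0 := by
    intro h; rw [h] at he; exact hl1 (by linear_combination -he)
  set Q : Fin 2 → ℂ := ![-l + e, -l - e] with hQdef
  have hQe1 : ∀ i, (Q i) ^ 2 + 2 * l * Q i + 1 = 0 := by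
    intro i; fin_cases i
    · show (-l + e) ^ 2 + 2 * l * (-l + e) + 1 = 0; linear_combination he
    · show (-l - e) ^ 2 + 2 * l * (-l - e) + 1 = 0; linear_combination he
  have hQlq : ∀ i, 1 + l * Q i ≠ 0 := fun i => aux_lq_ne l (Q i) (hQe1 i) hl1
  set A : Fin 2 → ℂ := fun i => -(l + Q i) / (1 + l * Q i) with hAdef
  have hAe2 : ∀ i, (A i) * (1 + l * Q i) = -(l + Q i) := by
    intro i; rw [hAdef]; field_simp [hQlq i]
  -- square roots for the c,d part
  have hex : ∀ z : ℂ, ∃ y, y ^ 2 = z := fun z => IsAlgClosed.exists_pow_nat_eq z two_pos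
  choose rt hrt using hex
  set p : Fin 2 → ℂ :=
    fun i => rt ((2 * l * A i - 2 * (A i) ^ 2 - 2) + (3 * (A i) ^ 2 + 3) / m) with hpdef
  set r : Fin 2 → ℂ :=
    fun i => rt ((2 * l * A i - 2 * (A i) ^ 2 - 2) - (3 * (A i) ^ 2 + 3) / m) with hrdef
  have hp2 : ∀ i, (p i) ^ 2 = (2 * l * A i - 2 * (A i) ^ 2 - 2) + (3 * (A i) ^ 2 + 3) / m :=
    fun i => hrt _
  have hr2 : ∀ i, (r i) ^ 2 = (2 * l * A i - 2 * (A i) ^ 2 - 2) - (3 * (A i) ^ 2 + 3) / m :=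
    fun i => hrt _
  have hpr : ∀ i, m * (p i) ^ 2 = m * (2 * l * A i - 2 * (A i) ^ 2 - 2) + (3 * (A i) ^ 2 + 3) := by
    intro i; rw [hp2 i]; field_simp
  have hrr : ∀ i, m * (r i) ^ 2 = m * (2 * l * A i - 2 * (A i) ^ 2 - 2) - (3 * (A i) ^ 2 + 3) := by
    intro i; rw [hr2 i]; field_simp
  have hplus : ∀ i, (p i) ^ 2 + (r i) ^ 2 = 4 * l * A i - 4 * (A i) ^ 2 - 4 := by
    intro i; rw [hp2 i, hr2 i]; ring
  set sg : Fin 2 → ℂ := ![1, -1] with hsgdef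
  have hsg2 : ∀ j, (sg j) ^ 2 = 1 := by
    intro j; fin_cases j
    · show (1 : ℂ) ^ 2 = 1; norm_num
    · show (-1 : ℂ) ^ 2 = 1; norm_num
  set tup : Fin 2 × Fin 2 × Fin 2 → ℂ × ℂ × ℂ × ℂ := fun s =>
    (Q s.1, A s.1, (sg s.2.1 * p s.1 + sg s.2.2 * r s.1) / 2,
      (sg s.2.1 * p s.1 - sg s.2.2 * r s.1) / 2) with htup
  have hfwd : ∀ s : Fin 2 × Fin 2 × Fin 2,
      lineEqs8 l m (tup s).1 (tup s).2.1 (tup s).2.2.1 (tup s).2.2.2 := by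
    rintro ⟨i, j, k⟩
    refine ⟨hQe1 i, hAe2 i, ?_, ?_⟩
    · show 2 * m * ((sg j * p i + sg k * r i) / 2) * ((sg j * p i - sg k * r i) / 2)
        = 3 * (A i) ^ 2 + 3
      linear_combination ((p i) ^ 2 * m / 2) * hsg2 j - ((r i) ^ 2 * m / 2) * hsg2 k
        + (1 / 2) * hpr i - (1 / 2) * hrr i
    · show ((sg j * p i + sg k * r i) / 2) ^ 2 + ((sg j * p i - sg k * r i) / 2) ^ 2
        + 2 * (A i) ^ 2 - 2 * l * A i + 2 = 0
      linear_combination ((p i) ^ 2 / 2) * hsg2 j + ((r i) ^ 2 / 2) * hsg2 k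
        + (1 / 2) * hplus i
  have hbwd : ∀ t : ℂ × ℂ × ℂ × ℂ,
      lineEqs8 l m t.1 t.2.1 t.2.2.1 t.2.2.2 → ∃ s, tup s = t := by
    rintro ⟨q, a, c, d⟩ ⟨e1, e2, e3, e4⟩
    have hfac : (q - Q 0) * (q - Q 1) = 0 := by
      have h0 : Q 0 = -l + e := rfl
      have h1 : Q 1 = -l - e := rfl
      rw [h0, h1]; linear_combination e1 - he
    obtain ⟨i, hq⟩ : ∃ i, q = Q i := by
      rcases mul_eq_zero.1 hfac with h | h
      · exact ⟨0, by linear_combination h⟩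
      · exact ⟨1, by linear_combination h⟩
    subst hq
    have ha : a = A i := by
      have h2 := hAe2 i
      have h'' : (a - A i) * (1 + l * Q i) = 0 := by linear_combination e2 - h2
      rcases mul_eq_zero.1 h'' with h | h
      · linear_combination h
      · exact absurd h (hQlq i)
    subst ha
    have hpe : m * (c + d) ^ 2 = m * (p i) ^ 2 := by
      rw [hpr i]; linear_combination e3 + m * e4
    have hre : m * (c - d) ^ 2 = m * (r i) ^ 2 := by
      rw [hrr i]; linear_combination -e3 + m * e4
    obtain ⟨j, hj⟩ : ∃ j, c + d = sg j * p i := by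
      have hcd1 : (c + d) ^ 2 = (p i) ^ 2 := mul_left_cancel₀ hm0 hpe
      rcases mul_eq_zero.1 (show (c + d - p i) * (c + d + p i) = 0 by
        linear_combination hcd1) with h | h
      · exact ⟨0, by show c + d = 1 * p i; linear_combination h⟩
      · exact ⟨1, by show c + d = -1 * p i; linear_combination h⟩
    obtain ⟨k, hk⟩ : ∃ k, c - d = sg k * r i := by
      have hcd1 : (c - d) ^ 2 = (r i) ^ 2 := mul_left_cancel₀ hm0 hre
      rcases mul_eq_zero.1 (show (c - d - r i) * (c - d + r i) = 0 by
        linear_combination hcd1) with h | h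
      · exact ⟨0, by show c - d = 1 * r i; linear_combination h⟩
      · exact ⟨1, by show c - d = -1 * r i; linear_combination h⟩
    refine ⟨(i, j, k), ?_⟩
    show (Q i, A i, (sg j * p i + sg k * r i) / 2, (sg j * p i - sg k * r i) / 2)
      = (Q i, A i, c, d)
    refine Prod.ext rfl (Prod.ext rfl (Prod.ext ?_ ?_))
    · show (sg j * p i + sg k * r i) / 2 = c
      linear_combination (-1 / 2) * hj + (-1 / 2) * hk
    · show (sg j * p i - sg k * r i) / 2 = d
      linear_combination (-1 / 2) * hj + (1 / 2) * hk
  have hQinj : ∀ i i' : Fin 2, Q i = Q i' → i = i' := by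
    intro i i' h
    fin_cases i <;> fin_cases i'
    · rfl
    · exfalso; apply he0
      have h' : -l + e = -l - e := h
      linear_combination h' / 2
    · exfalso; apply he0
      have h' : -l - e = -l + e := h
      linear_combination -h' / 2
    · rfl
  have hp0 : ∀ i, p i ≠ 0 := by
    intro i
    have h := (aux_cd_ne l m _ _ _ _ (hfwd (i, 0, 0)) hl0 hl1 hm0 hm1 hm2).1
    have hval2 : (tup (i, 0, 0)).2.2.1 + (tup (i, 0, 0)).2.2.2 = p i := by
      show (sg 0 * p i + sg 0 * r i) / 2 + (sg 0 * p i - sg 0 * r i) / 2 = p i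
      show (1 * p i + 1 * r i) / 2 + (1 * p i - 1 * r i) / 2 = p i
      ring
    rw [hval2] at h
    exact h
  have hr0 : ∀ i, r i ≠ 0 := by
    intro i
    have h := (aux_cd_ne l m _ _ _ _ (hfwd (i, 0, 0)) hl0 hl1 hm0 hm1 hm2).2
    have hval2 : (tup (i, 0, 0)).2.2.1 - (tup (i, 0, 0)).2.2.2 = r i := by
      show (sg 0 * p i + sg 0 * r i) / 2 - (sg 0 * p i - sg 0 * r i) / 2 = r i
      show (1 * p i + 1 * r i) / 2 - (1 * p i - 1 * r i) / 2 = r i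
      ring
    rw [hval2] at h
    exact h
  have hsginj : ∀ j j' : Fin 2, sg j = sg j' → j = j' := by
    intro j j' h
    fin_cases j <;> fin_cases j'
    · rfl
    · exfalso
      have h' : (1 : ℂ) = -1 := h
      norm_num at h'
    · exfalso
      have h' : (-1 : ℂ) = 1 := h
      norm_num at h'
    · rfl
  have htupinj : Function.Injective tup := by
    rintro ⟨i, j, k⟩ ⟨i', j', k'⟩ h
    simp only [htup, Prod.mk.injEq] at h
    obtain ⟨h1, h2, h3, h4⟩ := h
    have hi : i = i' := hQinj _ _ h1
    subst hi
    have hpj : sg j * p i = sg j' * p i := by linear_combination h3 + h4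
    have hj : j = j' := hsginj _ _ (mul_right_cancel₀ (hp0 i) hpj)
    have hrk : sg k * r i = sg k' * r i := by linear_combination h3 - h4
    have hk : k = k' := hsginj _ _ (mul_right_cancel₀ (hr0 i) hrk)
    subst hj; subst hk; rfl
  have hset : {t : ℂ × ℂ × ℂ × ℂ | lineEqs8 l m t.1 t.2.1 t.2.2.1 t.2.2.2}
      = tup '' Set.univ := by
    ext t
    simp only [Set.mem_setOf_eq, Set.image_univ, Set.mem_range]
    exact ⟨fun ht => hbwd t ht, fun ⟨s, hs⟩ => hs ▸ hfwd s⟩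
  refine ⟨?_, ?_, ?_⟩
  · rw [hset, Set.ncard_image_of_injective _ htupinj, Set.ncard_univ]
    simp [Nat.card_eq_fintype_card]
  · intro t ht t' ht' hplane
    have hcd := aux_cd_ne l m t.1 t.2.1 t.2.2.1 t.2.2.2 ht hl0 hl1 hm0 hm1 hm2
    obtain ⟨h1, h2, h3, h4⟩ := aux_inj w l m hw1 hl1 ht ht' hcd.1 hplane
    exact Prod.ext h1 (Prod.ext h2 (Prod.ext h3 h4))
  · intro t ht
    have hcd := aux_cd_ne l m t.1 t.2.1 t.2.2.1 t.2.2.2 ht hl0 hl1 hm0 hm1 hm2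
    exact ⟨aux_finrank w _ _ _ _ hcd.1, aux_on_line w l m _ _ _ _ hws ht⟩
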